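/- Suppose the objective f : X → ℝ depends only on the Hamming weight: for all x y : X, w(x) = w(y) implies f x = f y. Then with C := Matrix.diagonal (fun x => (f x : ℂ)), for every depth p : ℕ, all parameters β γ : Fin p → ℝ, and all x y : X with w(x) = w(y), the QAOA measurement probabilities satisfy Pr(x) = Pr(y). -/

import Mathlib

/-- Permutation matrix of a permutation `a` of a finite type `X`:
`(P a) x y = 1` if `x = a y` and `0` otherwise. -/
noncomputable def permMatrix {X : Type*} [Fintype X] [DecidableEq X] (a : Equiv.Perm X) :
    Matrix X X ℂ :=
  Matrix.of fun x y => if x = a y then 1 else 0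

/-- The transverse-field mixing Hamiltonian `B = ∑_j X_j` in the computational basis:
`B x y = 1` if the bitstrings `x` and `y` differ in exactly one coordinate, else `0`. -/
noncomputable def mixerB (n : ℕ) : Matrix (Fin n → Bool) (Fin n → Bool) ℂ :=
  Matrix.of fun x y => if (Finset.univ.filter fun i => x i ≠ y i).card = 1 then 1 else 0

/-- The diagonal objective Hamiltonian `C` of an objective function `f`. -/
noncomputable def objC (n : ℕ) (f : (Fin n → Bool) → ℝ) :
    Matrix (Fin n → Bool) (Fin n → Bool) ℂ :=
  Matrix.diagonal fun x => (f x : ℂ)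

/-- The uniform superposition initial state. -/
noncomputable def uniformState (n : ℕ) : (Fin n → Bool) → ℂ :=
  fun _ => ((1 / Real.sqrt (2 ^ n) : ℝ) : ℂ)

/-- The depth-`p` QAOA state with parameters `β γ : Fin p → ℝ`: the layers
`exp (-i γ_j C)` then `exp (-i β_j B)` are applied to the uniform initial state
in order `j = 1, …, p`. -/
noncomputable def qaoaState (n : ℕ) (f : (Fin n → Bool) → ℝ) (p : ℕ) (β γ : Fin p → ℝ) :
    (Fin n → Bool) → ℂ :=
  (((List.finRange p).map fun j =>
      NormedSpace.exp ((-(β j : ℂ) * Complex.I) • mixerB n) *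
        NormedSpace.exp ((-(γ j : ℂ) * Complex.I) • objC n f)).reverse.prod).mulVec
    (uniformState n)

/-- The Hamming weight of a bitstring: the number of coordinates equal to `true`. -/
def hammingWeight {n : ℕ} (x : Fin n → Bool) : ℕ :=
  (Finset.univ.filter fun i => x i = true).card

section Aux

variable {X : Type*} [Fintype X] [DecidableEq X]

lemma permMatrix_mulVec (a : Equiv.Perm X) (v : X → ℂ) :
    (permMatrix a).mulVec v = fun x => v (a.symm x) := by
  funext x
  simp only [Matrix.mulVec, dotProduct, permMatrix, Matrix.of_apply, ite_mul, one_mul,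
    zero_mul]
  rw [Finset.sum_eq_single (a.symm x)]
  · simp
  · intro b _ hb
    rw [if_neg]
    intro h
    exact hb (by simp [h])
  · simp

lemma permMatrix_commute (a : Equiv.Perm X) (M : Matrix X X ℂ)
    (h : ∀ x y, M (a x) (a y) = M x y) : Commute (permMatrix a) M := by
  unfold Commute SemiconjBy
  ext x y
  have h1 : (permMatrix a * M) x y = M (a.symm x) y := by
    simp only [Matrix.mul_apply, permMatrix, Matrix.of_apply, ite_mul, one_mul, zero_mul]
    rw [Finset.sum_eq_single (a.symm x)]
    · simp
    · intro b _ hb; rw [if_neg]; intro hh; exact hb (by simp [hh])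
    · simp
  have h2 : (M * permMatrix a) x y = M x (a y) := by
    simp only [Matrix.mul_apply, permMatrix, Matrix.of_apply, mul_ite, mul_one, mul_zero]
    rw [Finset.sum_eq_single (a y)]
    · simp
    · intro b _ hb; rw [if_neg hb]
    · simp
  rw [h1, h2]
  have := h (a.symm x) y
  rw [Equiv.apply_symm_apply] at this
  exact this.symm

lemma card_filter_comp {n : ℕ} (σ : Equiv.Perm (Fin n)) (p : Fin n → Prop) [DecidablePred p] :
    (Finset.univ.filter fun i => p (σ i)).card = (Finset.univ.filter p).card := by
  rw [← Fintype.card_subtype, ← Fintype.card_subtype]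
  exact Fintype.card_congr (σ.subtypeEquiv fun i => Iff.rfl)

end Aux

/-- If the objective `f` depends only on the Hamming weight, then QAOA measurement
probabilities coincide on bitstrings of equal Hamming weight: for every depth `p`,
all parameters, and all `x, y` with `w(x) = w(y)`, `Pr x = Pr y`. -/
theorem qaoa_hamming_symmetry (n : ℕ) (f : (Fin n → Bool) → ℝ)
    (hf : ∀ x y : Fin n → Bool, hammingWeight x = hammingWeight y → f x = f y) :
    ∀ (p : ℕ) (β γ : Fin p → ℝ) (x y : Fin n → Bool),
      hammingWeight x = hammingWeight y →
        ‖qaoaState n f p β γ x‖ ^ 2 = ‖qaoaState n f p β γ y‖ ^ 2 := by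
  intro p β γ x y hxy
  -- construct a coordinate permutation σ with x (σ i) = y i
  have hcard : Fintype.card {i // y i = true} = Fintype.card {i // x i = true} := by
    rw [Fintype.card_subtype, Fintype.card_subtype]
    exact hxy.symm
  have hcard' : Fintype.card {i // ¬ y i = true} = Fintype.card {i // ¬ x i = true} := by
    rw [Fintype.card_subtype_compl, Fintype.card_subtype_compl, hcard]
  let e₁ : {i // y i = true} ≃ {i // x i = true} := Fintype.equivOfCardEq hcard
  let e₂ : {i // ¬ y i = true} ≃ {i // ¬ x i = true} := Fintype.equivOfCardEq hcard'
  let σ : Equiv.Perm (Fin n) :=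
    (Equiv.sumCompl fun i => y i = true).symm.trans
      ((e₁.sumCongr e₂).trans (Equiv.sumCompl fun i => x i = true))
  have hσ : ∀ i, x (σ i) = y i := by
    intro i
    by_cases h : y i = true
    · have : σ i = (e₁ ⟨i, h⟩ : Fin n) := by
        show (Equiv.sumCompl fun i => x i = true)
          (Sum.map e₁ e₂ ((Equiv.sumCompl fun i => y i = true).symm i)) = _
        rw [Equiv.sumCompl_symm_apply_of_pos (p := fun j => y j = true) h, Sum.map_inl, Equiv.sumCompl_apply_inl]
      rw [this, (e₁ ⟨i, h⟩).property, h]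
    · have : σ i = (e₂ ⟨i, h⟩ : Fin n) := by
        show (Equiv.sumCompl fun i => x i = true)
          (Sum.map e₁ e₂ ((Equiv.sumCompl fun i => y i = true).symm i)) = _
        rw [Equiv.sumCompl_symm_apply_of_neg (p := fun j => y j = true) h, Sum.map_inr, Equiv.sumCompl_apply_inr]
      rw [this]
      have hx := (e₂ ⟨i, h⟩).property
      simp only [Bool.not_eq_true] at hx h
      rw [hx, h]
  -- the induced permutation of bitstrings
  let a : Equiv.Perm (Fin n → Bool) := Equiv.arrowCongr σ.symm (Equiv.refl Bool)
  have ha : ∀ (z : Fin n → Bool) (i : Fin n), a z i = z (σ i) := by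
    intro z i; simp [a, Equiv.arrowCongr]
  have haw : ∀ z : Fin n → Bool, hammingWeight (a z) = hammingWeight z := by
    intro z
    unfold hammingWeight
    have : ∀ i, a z i = z (σ i) := ha z
    calc (Finset.univ.filter fun i => a z i = true).card
        = (Finset.univ.filter fun i => z (σ i) = true).card := by
          simp only [ha]
      _ = (Finset.univ.filter fun i => z i = true).card :=
          card_filter_comp σ (fun i => z i = true)
  -- equivariance of B and C
  have hB : ∀ u v, mixerB n (a u) (a v) = mixerB n u v := by
    intro u v
    simp only [mixerB, Matrix.of_apply]
    congr 1
    have : (Finset.univ.filter fun i => a u i ≠ a v i).card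
        = (Finset.univ.filter fun i => u (σ i) ≠ v (σ i)).card := by
      simp only [ha]
    rw [this, card_filter_comp σ (fun i => u i ≠ v i)]
  have hC : ∀ u v, objC n f (a u) (a v) = objC n f u v := by
    intro u v
    simp only [objC, Matrix.diagonal_apply]
    by_cases h : u = v
    · subst h
      rw [if_pos rfl, if_pos rfl, hf (a u) u (haw u)]
    · rw [if_neg h, if_neg (fun hh => h (a.injective hh))]
  -- the permutation matrix commutes with every layer
  set P := permMatrix a with hP
  have hcomm : ∀ M ∈ ((List.finRange p).map fun j =>
      NormedSpace.exp ((-(β j : ℂ) * Complex.I) • mixerB n) *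
        NormedSpace.exp ((-(γ j : ℂ) * Complex.I) • objC n f)).reverse, Commute P M := by
    intro M hM
    rw [List.mem_reverse, List.mem_map] at hM
    obtain ⟨j, _, rfl⟩ := hM
    have cB : Commute P (mixerB n) := permMatrix_commute a _ hB
    have cC : Commute P (objC n f) := permMatrix_commute a _ hC
    exact ((cB.smul_right _).exp_right).mul_right ((cC.smul_right _).exp_right)
  have hU : Commute P (((List.finRange p).map fun j =>
      NormedSpace.exp ((-(β j : ℂ) * Complex.I) • mixerB n) *
        NormedSpace.exp ((-(γ j : ℂ) * Complex.I) • objC n f)).reverse.prod) :=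
    Commute.list_prod_right _ _ hcomm
  -- the uniform state is invariant
  have hs : P.mulVec (uniformState n) = uniformState n := by
    rw [permMatrix_mulVec]
    funext z; rfl
  -- invariance of the QAOA state
  have hinv : ∀ z, qaoaState n f p β γ (a.symm z) = qaoaState n f p β γ z := by
    intro z
    have : P.mulVec (qaoaState n f p β γ) = qaoaState n f p β γ := by
      unfold qaoaState
      rw [Matrix.mulVec_mulVec, hU.eq, ← Matrix.mulVec_mulVec, hs]
    calc qaoaState n f p β γ (a.symm z)
        = (P.mulVec (qaoaState n f p β γ)) z := by rw [permMatrix_mulVec]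
      _ = qaoaState n f p β γ z := by rw [this]
  -- conclude: a x = y
  have haxy : a x = y := by
    funext i; rw [ha x i, hσ i]
  have := hinv (a x)
  rw [Equiv.symm_apply_apply, haxy] at this
  rw [← this]
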